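/- Let m, n₁,…,n_l be positive integers, n := m + n₁ + ⋯ + n_l, and let T be the polynomial ring over 𝔽₂ = ℤ/2 in the indeterminates α₁,…,α_m and β_i^{(p)} for 1 ≤ p ≤ l, 1 ≤ i ≤ ⌊n_p/2⌋. With the conventions α₀ := 1, α_i := α_{2m+1−i} for m < i ≤ 2m+1, α_i := 0 for i < 0 or i > 2m+1, β_0^{(p)} := 1, β_i^{(p)} := β_{n_p−i}^{(p)} for ⌊n_p/2⌋ < i ≤ n_p, β_i^{(p)} := 0 for i < 0 or i > n_p, define μ_j := Σ_{a₁+⋯+a_l = j} β_{a₁}^{(1)}⋯β_{a_l}^{(l)} and ξ_k := Σ_{i=0}^{⌊k/2⌋} α_{k−2i}·μ_i + (binom(2n+1, k) mod 2). Set h' := ⌊m/2⌋ + ⌊n₁/2⌋ + ⋯ + ⌊n_l/2⌋ and let Î be the ideal of T generated by {ξ_i : 1 ≤ i ≤ m, i odd} ∪ {ξ_i : 2 ≤ i ≤ 2h', i even}. Then for every 1 ≤ j ≤ n, the element ξ_j lies in Î. -/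

import Mathlib

open MvPolynomial

/-- A sequence (given as a list) `a₁, …, aₙ` in a commutative ring `A` is `A`-regular if for
each `i`, `aᵢ` is not a zero divisor on `A ⧸ (a₁, …, a_{i-1})`. -/
def IsRegularSeq {A : Type*} [CommRing A] (l : List A) : Prop :=
  ∀ (i : ℕ) (h : i < l.length), ∀ x : A,
    l.get ⟨i, h⟩ * x ∈ Ideal.span {y | y ∈ l.take i} →
      x ∈ Ideal.span {y | y ∈ l.take i}

/-- The element `α_i` of the polynomial ring `T` over `𝔽₂` in the indeterminates
`α₁, …, α_m` and `β_i^{(p)}`, with the conventions `α_0 = 1`, `α_i = α_{2m+1−i}` for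
`m < i ≤ 2m+1`, and `α_i = 0` for `i > 2m+1`. -/
noncomputable def alT (m l : ℕ) (n : Fin l → ℕ) (i : ℕ) :
    MvPolynomial (Fin m ⊕ Σ p : Fin l, Fin (n p / 2)) (ZMod 2) :=
  if h : i ≤ 2 * m + 1 then
    (if h1 : 1 ≤ min i (2 * m + 1 - i) then
      X (Sum.inl ⟨min i (2 * m + 1 - i) - 1, by omega⟩) else 1)
  else 0

/-- The element `β_i^{(p)}` of `T`, with the conventions `β_0^{(p)} = 1`,
`β_i^{(p)} = β_{n_p−i}^{(p)}` for `⌊n_p/2⌋ < i ≤ n_p`, and `β_i^{(p)} = 0` for `i > n_p`. -/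
noncomputable def beT (m l : ℕ) (n : Fin l → ℕ) (p : Fin l) (i : ℕ) :
    MvPolynomial (Fin m ⊕ Σ p : Fin l, Fin (n p / 2)) (ZMod 2) :=
  if h : i ≤ n p then
    (if h1 : 1 ≤ min i (n p - i) then X (Sum.inr ⟨p, ⟨min i (n p - i) - 1, by omega⟩⟩) else 1)
  else 0

/-- `μ_j := Σ_{a₁+⋯+a_l = j} β_{a₁}^{(1)} ⋯ β_{a_l}^{(l)}`. -/
noncomputable def muT (m l : ℕ) (n : Fin l → ℕ) (j : ℕ) :
    MvPolynomial (Fin m ⊕ Σ p : Fin l, Fin (n p / 2)) (ZMod 2) :=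
  ∑ a ∈ (Fintype.piFinset fun _ : Fin l => Finset.range (j + 1)).filter
      (fun a => ∑ p, a p = j),
    ∏ p, beT m l n p (a p)

/-- `ξ_k := Σ_{i=0}^{⌊k/2⌋} α_{k−2i}·μ_i + (binom(2n+1, k) mod 2)`, with
`n = m + n₁ + ⋯ + n_l`. -/
noncomputable def xiT (m l : ℕ) (n : Fin l → ℕ) (k : ℕ) :
    MvPolynomial (Fin m ⊕ Σ p : Fin l, Fin (n p / 2)) (ZMod 2) :=
  (∑ i ∈ Finset.range (k / 2 + 1), alT m l n (k - 2 * i) * muT m l n i) +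
    (Nat.choose (2 * (m + ∑ p, n p) + 1) k :
      MvPolynomial (Fin m ⊕ Σ p : Fin l, Fin (n p / 2)) (ZMod 2))

/-- The subring `B ⊆ T` generated by all the indeterminates `β_i^{(p)}`. -/
noncomputable def BsubT (m l : ℕ) (n : Fin l → ℕ) :
    Subring (MvPolynomial (Fin m ⊕ Σ p : Fin l, Fin (n p / 2)) (ZMod 2)) :=
  Subring.closure (Set.range fun v : Σ p : Fin l, Fin (n p / 2) => X (Sum.inr v))

namespace Stmt19

open Polynomial Finset

variable (m l : ℕ) (n : Fin l → ℕ)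

abbrev TT := MvPolynomial (Fin m ⊕ Σ p : Fin l, Fin (n p / 2)) (ZMod 2)

theorem tt_add_self (x : TT m l n) : x + x = 0 := CharTwo.add_self_eq_zero x

/-! ### Basic properties of `alT` and `beT` -/

theorem alT_zero : alT m l n 0 = 1 := by
  rw [alT, dif_pos (by omega), dif_neg (by omega)]

theorem alT_eq_zero {i : ℕ} (h : 2 * m + 1 < i) : alT m l n i = 0 := by
  rw [alT, dif_neg (by omega)]

theorem alT_symm {i : ℕ} (h : i ≤ 2 * m + 1) :
    alT m l n (2 * m + 1 - i) = alT m l n i := by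
  rw [alT, alT, dif_pos (by omega), dif_pos h]
  by_cases h1 : 1 ≤ min i (2 * m + 1 - i)
  · rw [dif_pos (show 1 ≤ min (2*m+1-i) (2*m+1-(2*m+1-i)) by omega), dif_pos h1]
    exact congrArg MvPolynomial.X (congrArg Sum.inl (Fin.ext
      (show min (2*m+1-i) (2*m+1-(2*m+1-i)) - 1 = min i (2*m+1-i) - 1 by omega)))
  · rw [dif_neg (by omega), dif_neg h1]

theorem beT_zero (p : Fin l) : beT m l n p 0 = 1 := by
  rw [beT, dif_pos (by omega), dif_neg (by omega)]

theorem beT_eq_zero (p : Fin l) {i : ℕ} (h : n p < i) : beT m l n p i = 0 := by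
  rw [beT, dif_neg (by omega)]

theorem beT_symm (p : Fin l) {i : ℕ} (h : i ≤ n p) :
    beT m l n p (n p - i) = beT m l n p i := by
  rw [beT, beT, dif_pos (by omega), dif_pos h]
  by_cases h1 : 1 ≤ min i (n p - i)
  · rw [dif_pos (show 1 ≤ min (n p - i) (n p - (n p - i)) by omega), dif_pos h1]
    exact congrArg MvPolynomial.X (congrArg Sum.inr
      (congrArg (Sigma.mk p) (Fin.ext
        (show min (n p - i) (n p - (n p - i)) - 1 = min i (n p - i) - 1 by omega))))
  · rw [dif_neg (by omega), dif_neg h1]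

theorem beT_sum_zero (p : Fin l) (h : ¬ Even (n p)) :
    ∑ j ∈ Finset.range (n p + 1), beT m l n p j = 0 := by
  apply Finset.sum_involution (fun j _ => n p - j)
  · intro j hj
    rw [beT_symm m l n p (by simp at hj; omega)]
    exact tt_add_self _ _ _ _
  · intro j hj hne
    simp only [mem_range] at hj
    rw [Nat.even_iff] at h
    omega
  · intro j hj
    simp only [mem_range] at hj ⊢
    omega
  · intro j hj
    simp only [mem_range] at hj
    omega

/-! ### Polynomials -/

noncomputable def AP : Polynomial (TT m l n) :=
  ∑ i ∈ Finset.range (2 * m + 2), Polynomial.C (alT m l n i) * Polynomial.X ^ i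

noncomputable def BP (p : Fin l) : Polynomial (TT m l n) :=
  ∑ i ∈ Finset.range (n p + 1), Polynomial.C (beT m l n p i) * Polynomial.X ^ i

noncomputable def DP (p : Fin l) : Polynomial (TT m l n) :=
  ∑ i ∈ Finset.range (n p),
    Polynomial.C (∑ j ∈ Finset.range (i + 1), beT m l n p j) * Polynomial.X ^ i

noncomputable def CP (p : Fin l) : Polynomial (TT m l n) :=
  if Even (n p) then BP m l n p else DP m l n p

theorem coeff_AP (i : ℕ) : (AP m l n).coeff i = alT m l n i := by
  rw [AP, finset_sum_coeff]
  simp only [Polynomial.coeff_C_mul, Polynomial.coeff_X_pow, mul_ite, mul_one, mul_zero]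
  rw [Finset.sum_ite_eq]
  split_ifs with h
  · rfl
  · exact (alT_eq_zero m l n (by simp only [mem_range] at h; omega)).symm

theorem coeff_BP (p : Fin l) (i : ℕ) : (BP m l n p).coeff i = beT m l n p i := by
  rw [BP, finset_sum_coeff]
  simp only [Polynomial.coeff_C_mul, Polynomial.coeff_X_pow, mul_ite, mul_one, mul_zero]
  rw [Finset.sum_ite_eq]
  split_ifs with h
  · rfl
  · exact (beT_eq_zero m l n p (by simp only [mem_range] at h; omega)).symm

theorem coeff_DP (p : Fin l) (i : ℕ) :
    (DP m l n p).coeff i =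
      if i < n p then ∑ j ∈ Finset.range (i + 1), beT m l n p j else 0 := by
  rw [DP, finset_sum_coeff]
  simp only [Polynomial.coeff_C_mul, Polynomial.coeff_X_pow, mul_ite, mul_one, mul_zero]
  rw [Finset.sum_ite_eq]
  simp [Finset.mem_range]

theorem natDegree_AP : (AP m l n).natDegree ≤ 2 * m + 1 :=
  natDegree_le_iff_coeff_eq_zero.2 fun N hN => by
    rw [coeff_AP]; exact alT_eq_zero m l n hN

theorem natDegree_BP (p : Fin l) : (BP m l n p).natDegree ≤ n p :=
  natDegree_le_iff_coeff_eq_zero.2 fun N hN => by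
    rw [coeff_BP]; exact beT_eq_zero m l n p hN

theorem natDegree_DP (p : Fin l) : (DP m l n p).natDegree ≤ n p - 1 :=
  natDegree_le_iff_coeff_eq_zero.2 fun N hN => by
    rw [coeff_DP, if_neg (by omega)]

/-- `1 + X` as an abbreviation. -/
noncomputable def oX : Polynomial (TT m l n) := 1 + Polynomial.X

theorem coeff_oX_pow (d k : ℕ) : ((oX m l n) ^ d).coeff k = (d.choose k : TT m l n) :=
  Polynomial.coeff_one_add_X_pow _ d k

theorem oX_ne_zero : oX m l n ≠ 0 := fun h => by
  have h0 : (oX m l n).coeff 0 = 1 := by simp [oX]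
  rw [h] at h0
  simp at h0

theorem BP_eq_oX_mul_DP (p : Fin l) (h : ¬ Even (n p)) :
    BP m l n p = oX m l n * DP m l n p := by
  have hn1 : 1 ≤ n p := by rcases Nat.even_or_odd (n p) with he|ho; · exact absurd he h
                           · rcases ho with ⟨c, hc⟩; omega
  apply Polynomial.ext fun i => ?_
  rw [coeff_BP, oX, add_mul, one_mul, Polynomial.coeff_add]
  cases i with
  | zero =>
    rw [beT_zero]
    have : (Polynomial.X * DP m l n p).coeff 0 = 0 := by
      rw [Polynomial.mul_coeff_zero]; simp
    rw [this, add_zero, coeff_DP, if_pos (by omega), Finset.sum_range_one, beT_zero]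
  | succ i =>
    rw [Polynomial.coeff_X_mul, coeff_DP, coeff_DP]
    by_cases h1 : i + 1 < n p
    · rw [if_pos h1, if_pos (by omega), Finset.sum_range_succ]
      have hx : ∀ x y : TT m l n, y + x + y = x := fun x y => by
        rw [add_comm y x, add_assoc, tt_add_self m l n y, add_zero]
      exact (hx _ _).symm
    · by_cases h2 : i + 1 = n p
      · rw [if_neg (by omega), if_pos (by omega), zero_add]
        have hsum : ∑ j ∈ Finset.range (n p + 1), beT m l n p j = 0 :=
          beT_sum_zero m l n p h
        rw [Finset.sum_range_succ] at hsum
        have hnp : beT m l n p (n p) = 1 := by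
          have := beT_symm m l n p (i := 0) (by omega)
          rw [Nat.sub_zero] at this
          rw [this, beT_zero]
        rw [hnp] at hsum
        have : ∑ j ∈ Finset.range (n p), beT m l n p j = 1 := by
          have h11 : (1 : TT m l n) + 1 = 0 := tt_add_self m l n 1
          -- from hsum : S + 1 = 0 deduce S = 1
          have := congrArg (· + 1) hsum
          simpa [add_assoc, h11] using this
        rw [h2, hnp, this]
      · rw [if_neg (by omega), if_neg (by omega), add_zero,
          beT_eq_zero m l n p (by omega)]

theorem BP_eq_pow_mul_CP (p : Fin l) :
    BP m l n p = (oX m l n) ^ (n p % 2) * CP m l n p := by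
  by_cases h : Even (n p)
  · rw [CP, if_pos h, Nat.even_iff.1 h, pow_zero, one_mul]
  · rw [CP, if_neg h, show n p % 2 = 1 by rw [Nat.even_iff] at h; omega, pow_one]
    exact BP_eq_oX_mul_DP m l n p h

/-! ### Products and the factorization -/

noncomputable def MP : Polynomial (TT m l n) := ∏ p, BP m l n p
noncomputable def MQ : Polynomial (TT m l n) := ∏ p, CP m l n p

def eo : ℕ := ∑ p, n p % 2
def HH : ℕ := ∑ p, n p / 2

theorem sum_n_eq : (∑ p, n p) = 2 * HH l n + eo l n := by
  rw [HH, eo, Finset.mul_sum, ← Finset.sum_add_distrib]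
  exact Finset.sum_congr rfl fun p _ => by omega

theorem MP_eq : MP m l n = (oX m l n) ^ (eo l n) * MQ m l n := by
  rw [MP, MQ, eo]
  calc (∏ p, BP m l n p) = ∏ p, ((oX m l n) ^ (n p % 2) * CP m l n p) :=
        Finset.prod_congr rfl fun p _ => BP_eq_pow_mul_CP m l n p
    _ = (∏ p, (oX m l n) ^ (n p % 2)) * ∏ p, CP m l n p := Finset.prod_mul_distrib
    _ = _ := by rw [Finset.prod_pow_eq_pow_sum]

/-! ### Reflection (palindromicity) -/

theorem reflect_oX_pow (d : ℕ) : reflect d ((oX m l n) ^ d) = (oX m l n) ^ d := by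
  apply Polynomial.ext fun i => ?_
  rw [Polynomial.coeff_reflect, coeff_oX_pow, coeff_oX_pow]
  by_cases h : i ≤ d
  · rw [Polynomial.revAt_le h, Nat.choose_symm h]
  · rw [Polynomial.revAt_eq_self_of_lt (by omega)]

theorem reflect_AP : reflect (2 * m + 1) (AP m l n) = AP m l n := by
  apply Polynomial.ext fun i => ?_
  rw [Polynomial.coeff_reflect, coeff_AP, coeff_AP]
  by_cases h : i ≤ 2 * m + 1
  · rw [Polynomial.revAt_le h, alT_symm m l n h]
  · rw [Polynomial.revAt_eq_self_of_lt (by omega)]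

theorem reflect_BP (p : Fin l) : reflect (n p) (BP m l n p) = BP m l n p := by
  apply Polynomial.ext fun i => ?_
  rw [Polynomial.coeff_reflect, coeff_BP, coeff_BP]
  by_cases h : i ≤ n p
  · rw [Polynomial.revAt_le h, beT_symm m l n p h]
  · rw [Polynomial.revAt_eq_self_of_lt (by omega)]

theorem reflect_oX : reflect 1 (oX m l n) = oX m l n := by
  apply Polynomial.ext fun i => ?_
  rw [Polynomial.coeff_reflect]
  have c0 : (oX m l n).coeff 0 = 1 := by simp [oX]
  have c1 : (oX m l n).coeff 1 = 1 := by simp [oX, Polynomial.coeff_one]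
  match i with
  | 0 => rw [Polynomial.revAt_le (by omega), Nat.sub_zero, c0, c1]
  | 1 => rw [Polynomial.revAt_le (by omega), Nat.sub_self, c0, c1]
  | (j+2) =>
    rw [Polynomial.revAt_eq_self_of_lt (by omega)]

theorem natDegree_oX : (oX m l n).natDegree ≤ 1 :=
  natDegree_le_iff_coeff_eq_zero.2 fun N hN => by
    rw [oX, Polynomial.coeff_add, Polynomial.coeff_one, Polynomial.coeff_X,
      if_neg (by omega), if_neg (by omega), add_zero]

theorem reflect_CP (p : Fin l) :
    reflect (2 * (n p / 2)) (CP m l n p) = CP m l n p ∧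
      (CP m l n p).natDegree ≤ 2 * (n p / 2) := by
  by_cases h : Even (n p)
  · have h2 : 2 * (n p / 2) = n p := by rw [Nat.even_iff] at h; omega
    rw [CP, if_pos h, h2]
    exact ⟨reflect_BP m l n p, natDegree_BP m l n p⟩
  · have h1 : 1 ≤ n p := by rcases Nat.even_or_odd (n p) with he|⟨c, hc⟩
                            · exact absurd he h
                            · omega
    have h2 : 2 * (n p / 2) = n p - 1 := by rw [Nat.even_iff] at h; omega
    rw [CP, if_neg h, h2]
    refine ⟨?_, natDegree_DP m l n p⟩
    -- cancellation: reflect (n p) BP = BP and BP = oX * DP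
    have key : oX m l n * reflect (n p - 1) (DP m l n p) = oX m l n * DP m l n p := by
      have h3 := reflect_BP m l n p
      rw [BP_eq_oX_mul_DP m l n p h] at h3
      have h4 : reflect (1 + (n p - 1)) (oX m l n * DP m l n p) =
          reflect 1 (oX m l n) * reflect (n p - 1) (DP m l n p) :=
        Polynomial.reflect_mul _ _ (natDegree_oX m l n) (natDegree_DP m l n p)
      rw [show 1 + (n p - 1) = n p by omega] at h4
      rw [h4, reflect_oX] at h3
      exact h3
    exact mul_left_cancel₀ (oX_ne_zero m l n) key

theorem reflect_prod_helper {R : Type*} [CommSemiring R] {ι : Type*} (s : Finset ι)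
    (f : ι → Polynomial R) (d : ι → ℕ)
    (hd : ∀ p ∈ s, (f p).natDegree ≤ d p) (hr : ∀ p ∈ s, reflect (d p) (f p) = f p) :
    reflect (∑ p ∈ s, d p) (∏ p ∈ s, f p) = ∏ p ∈ s, f p := by
  induction s using Finset.cons_induction with
  | empty =>
    simp only [Finset.sum_empty, Finset.prod_empty]
    apply Polynomial.ext fun i => ?_
    rw [Polynomial.coeff_reflect]
    congr 1
    rcases Nat.eq_zero_or_pos i with h|h
    · subst h; simp
    · rw [Polynomial.revAt_eq_self_of_lt h]
  | cons a s ha ih =>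
    rw [Finset.prod_cons, Finset.sum_cons,
      Polynomial.reflect_mul _ _ (hd a (Finset.mem_cons_self a s))
        ((Polynomial.natDegree_prod_le _ _).trans
          (Finset.sum_le_sum fun p hp => hd p (Finset.mem_cons_of_mem hp))),
      hr a (Finset.mem_cons_self a s),
      ih (fun p hp => hd p (Finset.mem_cons_of_mem hp))
        (fun p hp => hr p (Finset.mem_cons_of_mem hp))]

theorem natDegree_MQ : (MQ m l n).natDegree ≤ 2 * HH l n := by
  rw [MQ, HH, Finset.mul_sum]
  exact (Polynomial.natDegree_prod_le _ _).trans
    (Finset.sum_le_sum fun p _ => (reflect_CP m l n p).2)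

theorem reflect_MQ : reflect (2 * HH l n) (MQ m l n) = MQ m l n := by
  rw [MQ, HH, Finset.mul_sum]
  exact reflect_prod_helper _ _ _ (fun p _ => (reflect_CP m l n p).2)
    (fun p _ => (reflect_CP m l n p).1)

/-! ### The substitution `X ↦ X²` -/

noncomputable def Phi : Polynomial (TT m l n) →+* Polynomial (TT m l n) :=
  Polynomial.eval₂RingHom Polynomial.C (Polynomial.X ^ 2)

theorem coeff_Phi (f : Polynomial (TT m l n)) (k : ℕ) :
    (Phi m l n f).coeff k = if 2 ∣ k then f.coeff (k / 2) else 0 := by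
  induction f using Polynomial.induction_on' with
  | add p q hp hq =>
    rw [map_add, Polynomial.coeff_add, hp, hq, Polynomial.coeff_add]
    split_ifs <;> simp
  | monomial d a =>
    rw [Phi, Polynomial.coe_eval₂RingHom]
    erw [Polynomial.eval₂_monomial]
    rw [← pow_mul, Polynomial.coeff_C_mul, Polynomial.coeff_X_pow,
      Polynomial.coeff_monomial]
    by_cases h : k = 2 * d
    · rw [if_pos h, if_pos (by omega), if_pos (by omega), mul_one]
    · rw [if_neg h, mul_zero]
      split_ifs with h1 h2
      · omega
      · rfl
      · rfl

theorem coeff_Phi_even (f : Polynomial (TT m l n)) (k : ℕ) :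
    (Phi m l n f).coeff (2 * k) = f.coeff k := by
  rw [coeff_Phi, if_pos (by omega), Nat.mul_div_cancel_left _ (by omega)]

theorem coeff_Phi_odd (f : Polynomial (TT m l n)) (k : ℕ) (hk : ¬ 2 ∣ k) :
    (Phi m l n f).coeff k = 0 := by
  rw [coeff_Phi, if_neg hk]

theorem Phi_oX : Phi m l n (oX m l n) = 1 + Polynomial.X ^ 2 := by
  rw [oX, map_add, map_one, Phi, Polynomial.coe_eval₂RingHom, Polynomial.eval₂_X]

theorem natDegree_Phi (f : Polynomial (TT m l n)) {D : ℕ} (hf : f.natDegree ≤ D) :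
    (Phi m l n f).natDegree ≤ 2 * D :=
  natDegree_le_iff_coeff_eq_zero.2 fun N hN => by
    rw [coeff_Phi]
    split_ifs with h
    · exact Polynomial.coeff_eq_zero_of_natDegree_lt (by omega)
    · rfl

theorem reflect_Phi (f : Polynomial (TT m l n)) {D : ℕ} (hf : f.natDegree ≤ D)
    (hr : reflect D f = f) : reflect (2 * D) (Phi m l n f) = Phi m l n f := by
  apply Polynomial.ext fun i => ?_
  rw [Polynomial.coeff_reflect]
  by_cases h : i ≤ 2 * D
  · rw [Polynomial.revAt_le h, coeff_Phi, coeff_Phi]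
    by_cases h2 : 2 ∣ i
    · rw [if_pos (by omega), if_pos h2]
      have : (reflect D f).coeff (i / 2) = f.coeff (i / 2) := by rw [hr]
      rw [Polynomial.coeff_reflect, Polynomial.revAt_le (by omega)] at this
      rw [show (2 * D - i) / 2 = D - i / 2 by omega, this]
    · rw [if_neg (by omega), if_neg h2]
  · rw [Polynomial.revAt_eq_self_of_lt (by omega)]

/-! ### Coefficients of `MP` are `muT` -/

theorem coeff_MP (j : ℕ) : (MP m l n).coeff j = muT m l n j := by
  rw [MP]
  have hBP : ∀ p : Fin l, BP m l n p =
      ∑ i ∈ Finset.range (n p + 1), Polynomial.C (beT m l n p i) * Polynomial.X ^ i :=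
    fun p => rfl
  rw [show (∏ p, BP m l n p) =
      ∏ p, ∑ i ∈ Finset.range (n p + 1), Polynomial.C (beT m l n p i) * Polynomial.X ^ i
    from Finset.prod_congr rfl fun p _ => hBP p]
  rw [Finset.prod_univ_sum]
  rw [Polynomial.finset_sum_coeff]
  have hterm : ∀ a : Fin l → ℕ,
      (∏ p, Polynomial.C (beT m l n p (a p)) * Polynomial.X ^ (a p)) =
        Polynomial.C (∏ p, beT m l n p (a p)) * Polynomial.X ^ (∑ p, a p) := by
    intro a
    rw [Finset.prod_mul_distrib, ← map_prod, Finset.prod_pow_eq_pow_sum]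
  simp only [hterm, Polynomial.coeff_C_mul, Polynomial.coeff_X_pow, mul_ite, mul_one,
    mul_zero]
  rw [← Finset.sum_filter]
  have hstep1 : ∑ a ∈ (Fintype.piFinset fun p : Fin l => Finset.range (n p + 1)).filter
        (fun a => j = ∑ p, a p), ∏ p, beT m l n p (a p) =
      ∑ a ∈ (Fintype.piFinset fun p : Fin l => Finset.range (n p + j + 1)).filter
        (fun a => j = ∑ p, a p), ∏ p, beT m l n p (a p) := by
    apply Finset.sum_subset
    · apply Finset.filter_subset_filter
      apply Fintype.piFinset_subset
      intro p
      intro x hx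
      simp only [Finset.mem_range] at hx ⊢
      omega
    · intro a ha hna
      rw [Finset.mem_filter] at ha hna
      have h1 : ¬ a ∈ Fintype.piFinset fun p : Fin l => Finset.range (n p + 1) := by
        intro hmem; exact hna ⟨hmem, ha.2⟩
      rw [Fintype.mem_piFinset] at h1
      push_neg at h1
      obtain ⟨p, hp⟩ := h1
      rw [Finset.mem_range] at hp
      exact Finset.prod_eq_zero (Finset.mem_univ p) (beT_eq_zero m l n p (by omega))
  rw [hstep1]
  have hstep2 : (Fintype.piFinset fun p : Fin l => Finset.range (n p + j + 1)).filter
        (fun a => j = ∑ p, a p) =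
      (Fintype.piFinset fun _ : Fin l => Finset.range (j + 1)).filter
        (fun a => ∑ p, a p = j) := by
    apply Finset.ext fun a => ?_
    simp only [Finset.mem_filter, Fintype.mem_piFinset, Finset.mem_range]
    constructor
    · rintro ⟨hb, hs⟩
      refine ⟨fun p => ?_, hs.symm⟩
      have := Finset.single_le_sum (f := a) (fun i _ => Nat.zero_le _) (Finset.mem_univ p)
      omega
    · rintro ⟨hb, hs⟩
      exact ⟨fun p => by have := hb p; omega, hs.symm⟩
  rw [hstep2, muT]

/-! ### The generating polynomials -/

def nhat : ℕ := m + 2 * HH l n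

noncomputable def Th : Polynomial (TT m l n) :=
  AP m l n * Phi m l n (MP m l n) + (oX m l n) ^ (2 * (m + ∑ p, n p) + 1)

noncomputable def Thh : Polynomial (TT m l n) :=
  AP m l n * Phi m l n (MQ m l n) + (oX m l n) ^ (2 * nhat m l n + 1)

noncomputable def ze (k : ℕ) : TT m l n := (Thh m l n).coeff k

/-- Sums of functions supported on even numbers. -/
theorem sum_even_support (g : ℕ → TT m l n) (k : ℕ) (hg : ∀ j, ¬ 2 ∣ j → g j = 0) :
    ∑ j ∈ Finset.range (k + 1), g j = ∑ i ∈ Finset.range (k / 2 + 1), g (2 * i) := by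
  rw [← Finset.sum_filter_of_ne (p := fun j => 2 ∣ j)
    (fun x _ hx => by by_contra h; exact hx (hg x h))]
  refine Finset.sum_bij' (fun a _ => a / 2) (fun i _ => 2 * i) ?_ ?_ ?_ ?_ ?_
  · intro a ha
    simp only [Finset.mem_filter, Finset.mem_range] at ha
    simp only [Finset.mem_range]
    omega
  · intro i hi
    simp only [Finset.mem_range] at hi
    simp only [Finset.mem_filter, Finset.mem_range]
    omega
  · intro a ha
    simp only [Finset.mem_filter, Finset.mem_range] at ha
    show 2 * (a / 2) = a
    omega
  · intro i hi
    show 2 * i / 2 = i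
    omega
  · intro a ha
    simp only [Finset.mem_filter, Finset.mem_range] at ha
    show g a = g (2 * (a / 2))
    rw [show 2 * (a / 2) = a by omega]

/-- Generic coefficient formula. -/
theorem coeff_theta (f : Polynomial (TT m l n)) (d k : ℕ) :
    (AP m l n * Phi m l n f + (oX m l n) ^ d).coeff k =
      (∑ i ∈ Finset.range (k / 2 + 1), alT m l n (k - 2 * i) * f.coeff i) +
        (d.choose k : TT m l n) := by
  rw [Polynomial.coeff_add, coeff_oX_pow]
  congr 1
  rw [mul_comm, Polynomial.coeff_mul, Finset.Nat.sum_antidiagonal_eq_sum_range_succ_mk]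
  rw [sum_even_support m l n _ k
    (fun j hj => by rw [coeff_Phi_odd m l n f j hj, zero_mul])]
  apply Finset.sum_congr rfl fun i _ => ?_
  rw [coeff_Phi_even, coeff_AP, mul_comm]

/-- `ξ` as coefficients of `Th`. -/
theorem xiT_coeff (k : ℕ) : xiT m l n k = (Th m l n).coeff k := by
  rw [Th, coeff_theta, xiT]
  refine congrArg (· + _) ?_
  exact Finset.sum_congr rfl fun i _ => by rw [coeff_MP]

/-! ### Parity of binomials -/

theorem choose_cast_zero (a b : ℕ) : (((2 * a).choose (2 * b + 1) : ℕ) : TT m l n) = 0 := by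
  have h2 : 2 ∣ (2 * a).choose (2 * b + 1) := by
    rcases Nat.eq_zero_or_pos a with ha|ha
    · subst ha
      rw [Nat.choose_eq_zero_of_lt (by omega)]
      exact dvd_zero 2
    · have key := Nat.add_one_mul_choose_eq (2 * a - 1) (2 * b)
      have h1 : 2 * a - 1 + 1 = 2 * a := by omega
      rw [h1] at key
      -- key : 2 * a * (2 * a - 1).choose (2 * b) = (2 * a).choose (2 * b + 1) * (2 * b + 1)
      have hdvd : 2 ∣ (2 * a).choose (2 * b + 1) * (2 * b + 1) := by
        rw [← key]; exact ⟨a * (2 * a - 1).choose (2 * b), by ring⟩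
      rcases (Nat.Prime.dvd_mul Nat.prime_two).1 hdvd with h|h
      · exact h
      · omega
  obtain ⟨c, hc⟩ := h2
  rw [hc]
  push_cast
  exact mul_eq_zero_of_left CharTwo.two_eq_zero _

/-- Pairing identity: the sum of consecutive even/odd coefficients. -/
theorem theta_pair (f : Polynomial (TT m l n)) (w k : ℕ) :
    (AP m l n * Phi m l n f + (oX m l n) ^ (2 * w + 1)).coeff (2 * k) +
      (AP m l n * Phi m l n f + (oX m l n) ^ (2 * w + 1)).coeff (2 * k + 1) =
      ∑ i ∈ Finset.range (k + 1),
        (alT m l n (2 * (k - i)) + alT m l n (2 * (k - i) + 1)) * f.coeff i := by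
  rw [coeff_theta, coeff_theta]
  rw [show 2 * k / 2 = k by omega, show (2 * k + 1) / 2 = k by omega]
  have hch : ((2 * w + 1).choose (2 * k) : TT m l n) + ((2 * w + 1).choose (2 * k + 1)) =
      0 := by
    rw [← Nat.cast_add, ← Nat.choose_succ_succ' (2 * w + 1) (2 * k),
      show 2 * w + 1 + 1 = 2 * (w + 1) by omega]
    exact choose_cast_zero m l n (w + 1) k
  rw [add_add_add_comm, hch, add_zero, ← Finset.sum_add_distrib]
  apply Finset.sum_congr rfl fun i hi => ?_
  rw [Finset.mem_range] at hi
  rw [show 2 * k - 2 * i = 2 * (k - i) by omega,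
    show 2 * k + 1 - 2 * i = 2 * (k - i) + 1 by omega, ← add_mul]

theorem add_sandwich (x y : TT m l n) : (y + x) + y = x := by
  rw [add_comm y x, add_assoc, tt_add_self, add_zero]

/-! ### Factorization of `Th` -/

theorem Th_factor :
    Th m l n = (1 + Polynomial.X ^ 2) ^ (eo l n) * Thh m l n := by
  have hsq : (oX m l n) ^ 2 = 1 + Polynomial.X ^ 2 := by
    rw [oX, CharTwo.add_sq, one_pow]
  have hexp : 2 * (m + ∑ p, n p) + 1 = 2 * eo l n + (2 * nhat m l n + 1) := by
    rw [sum_n_eq, nhat]; ring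
  rw [Th, Thh, MP_eq, map_mul, map_pow, Phi_oX, hexp, pow_add, pow_mul, hsq]
  ring

theorem coeff_q (j : ℕ) :
    ((1 + Polynomial.X ^ 2 : Polynomial (TT m l n)) ^ (eo l n)).coeff j =
      if 2 ∣ j then ((eo l n).choose (j / 2) : TT m l n) else 0 := by
  rw [show (1 + Polynomial.X ^ 2 : Polynomial (TT m l n)) = Phi m l n (oX m l n) from
    (Phi_oX m l n).symm, ← map_pow, coeff_Phi]
  split_ifs with h
  · rw [coeff_oX_pow]
  · rfl

theorem xiT_eq_sum_ze (k : ℕ) : xiT m l n k =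
    ∑ i ∈ Finset.range (k / 2 + 1), ((eo l n).choose i : TT m l n) * ze m l n (k - 2 * i) := by
  rw [xiT_coeff, Th_factor, Polynomial.coeff_mul,
    Finset.Nat.sum_antidiagonal_eq_sum_range_succ_mk]
  rw [sum_even_support m l n _ k
    (fun j hj => by rw [coeff_q m l n j, if_neg hj, zero_mul])]
  apply Finset.sum_congr rfl fun i _ => ?_
  rw [coeff_q, if_pos ⟨i, rfl⟩, Nat.mul_div_cancel_left _ (by omega)]
  rfl

/-! ### `η` and the pairing identities -/

noncomputable def eta (k : ℕ) : TT m l n := alT m l n (2 * k) + alT m l n (2 * k + 1)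

theorem xiT_pair (k : ℕ) : xiT m l n (2 * k) + xiT m l n (2 * k + 1) =
    ∑ i ∈ Finset.range (k + 1), eta m l n (k - i) * muT m l n i := by
  rw [xiT_coeff, xiT_coeff, Th, theta_pair m l n (MP m l n) (m + ∑ p, n p) k]
  exact Finset.sum_congr rfl fun i _ => by simp only [eta, coeff_MP]

theorem zeta_pair (k : ℕ) : ze m l n (2 * k) + ze m l n (2 * k + 1) =
    ∑ i ∈ Finset.range (k + 1), eta m l n (k - i) * (MQ m l n).coeff i := by
  rw [ze, ze, Thh, theta_pair m l n (MQ m l n) (nhat m l n) k]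
  exact Finset.sum_congr rfl fun i _ => by simp only [eta]

/-! ### Palindromic symmetry of `Thh` -/

theorem natDegree_Thh : (Thh m l n).natDegree ≤ 2 * nhat m l n + 1 := by
  rw [Thh]
  apply (Polynomial.natDegree_add_le _ _).trans
  apply max_le
  · apply (Polynomial.natDegree_mul_le).trans
    have h1 := natDegree_AP m l n
    have h2 := natDegree_Phi m l n (MQ m l n) (natDegree_MQ m l n)
    have h3 : nhat m l n = m + 2 * HH l n := rfl
    omega
  · apply (Polynomial.natDegree_pow_le).trans
    exact (Nat.mul_le_mul_left _ (natDegree_oX m l n)).trans (by omega)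

theorem reflect_Thh : reflect (2 * nhat m l n + 1) (Thh m l n) = Thh m l n := by
  rw [Thh, Polynomial.reflect_add]
  have h1 : reflect (2 * m + 1 + 2 * (2 * HH l n)) (AP m l n * Phi m l n (MQ m l n)) =
      reflect (2 * m + 1) (AP m l n) * reflect (2 * (2 * HH l n)) (Phi m l n (MQ m l n)) :=
    Polynomial.reflect_mul _ _ (natDegree_AP m l n)
      (natDegree_Phi m l n (MQ m l n) (natDegree_MQ m l n))
  rw [show 2 * nhat m l n + 1 = 2 * m + 1 + 2 * (2 * HH l n) from by rw [nhat]; ring]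
  rw [h1, reflect_AP, reflect_Phi m l n (MQ m l n) (natDegree_MQ m l n) (reflect_MQ m l n)]
  rw [show 2 * m + 1 + 2 * (2 * HH l n) = 2 * nhat m l n + 1 from by rw [nhat]; ring]
  rw [reflect_oX_pow]

theorem zeta_palin (k : ℕ) (hk : k ≤ 2 * nhat m l n + 1) :
    ze m l n (2 * nhat m l n + 1 - k) = ze m l n k := by
  have h := congrArg (fun f : Polynomial (TT m l n) => f.coeff k) (reflect_Thh m l n)
  simp only [Polynomial.coeff_reflect] at h
  rw [Polynomial.revAt_le hk] at h
  exact h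

theorem zeta_large {k : ℕ} (hk : 2 * nhat m l n + 1 < k) : ze m l n k = 0 :=
  Polynomial.coeff_eq_zero_of_natDegree_lt (lt_of_le_of_lt (natDegree_Thh m l n) hk)

theorem coeff_MQ_zero : (MQ m l n).coeff 0 = 1 := by
  rw [Polynomial.coeff_zero_eq_eval_zero, MQ, Polynomial.eval_prod]
  apply Finset.prod_eq_one fun p _ => ?_
  rw [← Polynomial.coeff_zero_eq_eval_zero]
  by_cases h : Even (n p)
  · rw [CP, if_pos h, coeff_BP, beT_zero]
  · have h1 : 1 ≤ n p := by
      rcases Nat.even_or_odd (n p) with he|⟨c, hc⟩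
      · exact absurd he h
      · omega
    rw [CP, if_neg h, coeff_DP, if_pos (by omega), Finset.sum_range_one, beT_zero]

theorem zeta_zero : ze m l n 0 = 0 := by
  rw [ze, Thh, coeff_theta]
  rw [show (0 : ℕ) / 2 + 1 = 1 from by norm_num, Finset.sum_range_one]
  rw [show (0 : ℕ) - 2 * 0 = 0 from rfl, alT_zero, coeff_MQ_zero, one_mul,
    Nat.choose_zero_right, Nat.cast_one]
  exact tt_add_self m l n 1

theorem muT_zero : muT m l n 0 = 1 := by
  rw [muT]
  have hset : (Fintype.piFinset fun _ : Fin l => Finset.range (0 + 1)).filter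
      (fun a => ∑ p, a p = 0) = {fun _ => 0} := by
    apply Finset.ext fun a => ?_
    simp only [Finset.mem_filter, Fintype.mem_piFinset, Finset.mem_range,
      Finset.mem_singleton]
    constructor
    · rintro ⟨hb, _⟩
      funext p
      have := hb p
      omega
    · rintro rfl
      simp
  rw [hset, Finset.sum_singleton]
  exact Finset.prod_eq_one fun p _ => beT_zero m l n p

theorem xiT_zero : xiT m l n 0 = 0 := by
  rw [xiT]
  rw [show (0 : ℕ) / 2 + 1 = 1 from by norm_num, Finset.sum_range_one]
  rw [show (0 : ℕ) - 2 * 0 = 0 from rfl, alT_zero, muT_zero, one_mul,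
    Nat.choose_zero_right, Nat.cast_one]
  exact tt_add_self m l n 1

/-! ### The ideal and membership -/

noncomputable def JJ : Ideal (TT m l n) :=
  Ideal.span
    ({x | ∃ i, Odd i ∧ 1 ≤ i ∧ i ≤ m ∧ x = xiT m l n i} ∪
      {x | ∃ i, Even i ∧ 2 ≤ i ∧ i ≤ 2 * (m / 2 + ∑ p, n p / 2) ∧ x = xiT m l n i})

theorem xiT_mem_odd {i : ℕ} (h1 : Odd i) (h2 : i ≤ m) : xiT m l n i ∈ JJ m l n := by
  apply Ideal.subset_span
  left
  exact ⟨i, h1, by rcases h1 with ⟨c, hc⟩; omega, h2, rfl⟩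

theorem xiT_mem_even {i : ℕ} (h1 : Even i) (h2 : 2 ≤ i)
    (h3 : i ≤ 2 * (m / 2 + HH l n)) : xiT m l n i ∈ JJ m l n := by
  apply Ideal.subset_span
  right
  exact ⟨i, h1, h2, h3, rfl⟩

theorem xiT_mem_even' {i : ℕ} (h1 : Even i) (h3 : i ≤ 2 * (m / 2 + HH l n)) :
    xiT m l n i ∈ JJ m l n := by
  rcases Nat.eq_zero_or_pos i with h0|h0
  · rw [h0, xiT_zero]; exact zero_mem _
  · exact xiT_mem_even m l n h1 (by rcases h1 with ⟨c, hc⟩; omega) h3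

theorem eta_symm {k : ℕ} (hk : k ≤ m) : eta m l n (m - k) = eta m l n k := by
  rw [eta, eta]
  have h1 : alT m l n (2 * (m - k)) = alT m l n (2 * k + 1) := by
    have h := alT_symm m l n (i := 2 * k + 1) (by omega)
    rw [show 2 * m + 1 - (2 * k + 1) = 2 * (m - k) by omega] at h
    exact h
  have h2 : alT m l n (2 * (m - k) + 1) = alT m l n (2 * k) := by
    have h := alT_symm m l n (i := 2 * k) (by omega)
    rw [show 2 * m + 1 - 2 * k = 2 * (m - k) + 1 by omega] at h
    exact h
  rw [h1, h2, add_comm]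

theorem eta_mem (hm : 1 ≤ m) : ∀ k, eta m l n k ∈ JJ m l n := by
  intro k
  induction k using Nat.strong_induction_on with
  | _ k ih =>
  by_cases hk1 : 2 * k + 1 ≤ m
  · have hp := xiT_pair m l n k
    rw [Finset.sum_range_succ', Nat.sub_zero, muT_zero, mul_one] at hp
    have heq : eta m l n k = (xiT m l n (2 * k) + xiT m l n (2 * k + 1)) +
        ∑ i ∈ Finset.range k, eta m l n (k - (i + 1)) * muT m l n (i + 1) := by
      rw [hp]
      exact (add_sandwich m l n _ _).symm
    rw [heq]
    apply Ideal.add_mem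
    · apply Ideal.add_mem
      · exact xiT_mem_even' m l n (even_two_mul k) (by omega)
      · exact xiT_mem_odd m l n ⟨k, by omega⟩ hk1
    · exact Ideal.sum_mem _ fun i hi => Ideal.mul_mem_right _ _
        (ih _ (by rw [Finset.mem_range] at hi; omega))
  · by_cases hk2 : k ≤ m
    · by_cases hk3 : 2 * k = m
      · have h1 : alT m l n (2 * k + 1) = alT m l n (2 * k) := by
          have h := alT_symm m l n (i := 2 * k + 1) (by omega)
          rw [show 2 * m + 1 - (2 * k + 1) = 2 * k by omega] at h
          exact h.symm
        rw [eta, h1, tt_add_self]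
        exact zero_mem _
      · have h := eta_symm m l n (k := m - k) (by omega)
        rw [show m - (m - k) = k by omega] at h
        rw [h]
        exact ih (m - k) (by omega)
    · rw [eta, alT_eq_zero m l n (by omega), alT_eq_zero m l n (by omega), add_zero]
      exact zero_mem _

theorem zeta_small_mem (hm : 1 ≤ m) : ∀ k,
    (Odd k → k ≤ m → ze m l n k ∈ JJ m l n) ∧
      (Even k → k ≤ 2 * (m / 2 + HH l n) → ze m l n k ∈ JJ m l n) := by
  intro k
  induction k using Nat.strong_induction_on with
  | _ k ih =>
  have hz : ze m l n k = xiT m l n k +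
      ∑ i ∈ Finset.range (k / 2),
        ((eo l n).choose (i + 1) : TT m l n) * ze m l n (k - 2 * (i + 1)) := by
    have h5 := xiT_eq_sum_ze m l n k
    rw [Finset.sum_range_succ', Nat.choose_zero_right, Nat.cast_one, one_mul,
      Nat.mul_zero, Nat.sub_zero] at h5
    rw [h5]
    exact (add_sandwich m l n _ _).symm
  constructor
  · intro hodd hkm
    rw [hz]
    apply Ideal.add_mem
    · exact xiT_mem_odd m l n hodd hkm
    · apply Ideal.sum_mem
      intro i hi
      rw [Finset.mem_range] at hi
      apply Ideal.mul_mem_left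
      refine (ih _ (by omega)).1 ?_ (by omega)
      rw [Nat.odd_iff] at hodd ⊢
      omega
  · intro heven hk2
    rw [hz]
    apply Ideal.add_mem
    · exact xiT_mem_even' m l n heven hk2
    · apply Ideal.sum_mem
      intro i hi
      rw [Finset.mem_range] at hi
      apply Ideal.mul_mem_left
      refine (ih _ (by omega)).2 ?_ (by omega)
      rw [Nat.even_iff] at heven ⊢
      omega

theorem zeta_even_mem (hm : 1 ≤ m) (k : ℕ) : ze m l n (2 * k) ∈ JJ m l n := by
  have hnh : nhat m l n = m + 2 * HH l n := rfl
  by_cases h1 : k ≤ m / 2 + HH l n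
  · exact (zeta_small_mem m l n hm (2 * k)).2 (even_two_mul k) (by omega)
  · by_cases h2 : k ≤ nhat m l n
    · have hS : (∑ i ∈ Finset.range (k + 1),
          eta m l n (k - i) * (MQ m l n).coeff i) ∈ JJ m l n :=
        Ideal.sum_mem _ fun i _ => Ideal.mul_mem_right _ _ (eta_mem m l n hm _)
      have h3 : ze m l n (2 * k + 1) ∈ JJ m l n := by
        have hpal := zeta_palin m l n (2 * k + 1) (by omega)
        rw [show 2 * nhat m l n + 1 - (2 * k + 1) = 2 * (nhat m l n - k) by omega] at hpal
        rw [← hpal]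
        exact (zeta_small_mem m l n hm _).2 (even_two_mul _) (by omega)
      have heq : ze m l n (2 * k) =
          (ze m l n (2 * k) + ze m l n (2 * k + 1)) + ze m l n (2 * k + 1) := by
        rw [add_assoc, tt_add_self, add_zero]
      rw [heq, zeta_pair]
      exact Ideal.add_mem _ hS h3
    · rw [zeta_large m l n (by omega)]
      exact zero_mem _

theorem zeta_mem (hm : 1 ≤ m) (j : ℕ) : ze m l n j ∈ JJ m l n := by
  rcases Nat.even_or_odd j with ⟨r, hr⟩ | ⟨r, hr⟩
  · rw [hr, ← two_mul]
    exact zeta_even_mem m l n hm r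
  · rw [hr]
    have heq : ze m l n (2 * r + 1) =
        (ze m l n (2 * r) + ze m l n (2 * r + 1)) + ze m l n (2 * r) := by
      rw [add_comm (ze m l n (2 * r)) (ze m l n (2 * r + 1)), add_assoc, tt_add_self,
        add_zero]
    rw [heq, zeta_pair]
    exact Ideal.add_mem _
      (Ideal.sum_mem _ fun i _ => Ideal.mul_mem_right _ _ (eta_mem m l n hm _))
      (zeta_even_mem m l n hm r)

theorem main (hm : 1 ≤ m) (j : ℕ) : xiT m l n j ∈ JJ m l n := by
  rw [xiT_eq_sum_ze]
  exact Ideal.sum_mem _ fun i _ => Ideal.mul_mem_left _ _ (zeta_mem m l n hm _)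

end Stmt19

/-- For every `1 ≤ j ≤ n`, the element `ξ_j` lies in the ideal `Î` of `T` generated by
`{ξ_i : 1 ≤ i ≤ m, i odd} ∪ {ξ_i : 2 ≤ i ≤ 2h', i even}`, with
`h' = ⌊m/2⌋ + ⌊n₁/2⌋ + ⋯ + ⌊n_l/2⌋` and `n = m + n₁ + ⋯ + n_l`. -/
theorem stmt_19 (m l : ℕ) (hm : 1 ≤ m) (hl : 1 ≤ l) (n : Fin l → ℕ) (hn : ∀ p, 1 ≤ n p)
    (j : ℕ) (hj1 : 1 ≤ j) (hj2 : j ≤ m + ∑ p, n p) :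
    xiT m l n j ∈
      Ideal.span
        ({x | ∃ i, Odd i ∧ 1 ≤ i ∧ i ≤ m ∧ x = xiT m l n i} ∪
          {x | ∃ i, Even i ∧ 2 ≤ i ∧ i ≤ 2 * (m / 2 + ∑ p, n p / 2) ∧ x = xiT m l n i}) :=
  Stmt19.main m l n hm j
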